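/- Let ψ(x) = p|x|²/(2D²) on the ball of radius D centered at the origin in ℝ^n, where 1 ≤ p ≤ n. Then the function −e^{−ψ} is p-plurisubharmonic on that ball, i.e., at each point x with |x| ≤ D, every sum of p eigenvalues of the Hessian matrix of −e^{−ψ} is nonnegative. -/

import Mathlib

open Real EuclideanSpace

noncomputable abbrev L1 {n : ℕ} (y : EuclideanSpace ℝ (Fin n)) :
    EuclideanSpace ℝ (Fin n) →L[ℝ] ℝ :=
  (fderivInnerCLM ℝ (y, y)).comp
    ((ContinuousLinearMap.id ℝ _).prod (ContinuousLinearMap.id ℝ _))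

lemma aux1 {n : ℕ} (a : ℝ) (y : EuclideanSpace ℝ (Fin n)) :
    HasFDerivAt (fun t : EuclideanSpace ℝ (Fin n) => -Real.exp (-(a * ‖t‖ ^ 2)))
      ((a * Real.exp (-(a * ‖y‖ ^ 2))) • L1 y) y := by
  have h1 : HasFDerivAt (fun t : EuclideanSpace ℝ (Fin n) =>
      (inner ℝ t t : ℝ)) (L1 y) y :=
    (hasFDerivAt_id y).inner ℝ (hasFDerivAt_id y)
  have h2 : HasDerivAt (fun r : ℝ => -Real.exp (-(a * r)))
      (a * Real.exp (-(a * ‖y‖ ^ 2))) (inner ℝ y y : ℝ) := by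
    have := (((hasDerivAt_id ((inner ℝ y y : ℝ))).const_mul a).neg.exp).neg
    simp only [id] at this
    refine this.congr_deriv ?_
    rw [real_inner_self_eq_norm_sq]; simp only [Pi.neg_apply]; ring
  have := HasDerivAt.comp_hasFDerivAt (f := fun t : EuclideanSpace ℝ (Fin n) => (inner ℝ t t : ℝ)) y h2 h1
  simp only [Function.comp_def] at this
  rw [show (fun t : EuclideanSpace ℝ (Fin n) => -Real.exp (-(a * ‖t‖ ^ 2)))
      = fun t => -Real.exp (-(a * (inner ℝ t t : ℝ))) from
      funext fun t => by rw [real_inner_self_eq_norm_sq]]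
  exact this

lemma fderiv_eval {n : ℕ} (a : ℝ) (y : EuclideanSpace ℝ (Fin n)) (j : Fin n) :
    fderiv ℝ (fun t : EuclideanSpace ℝ (Fin n) => -Real.exp (-(a * ‖t‖ ^ 2))) y
      (EuclideanSpace.single j 1) = 2 * a * Real.exp (-(a * ‖y‖ ^ 2)) * y j := by
  rw [(aux1 a y).fderiv]
  simp [fderivInnerCLM_apply, EuclideanSpace.inner_single_left,
    EuclideanSpace.inner_single_right, real_inner_comm]
  ring

/-- The Hessian matrix of a function on `EuclideanSpace ℝ (Fin n)`, with entries
the second partial derivatives in the coordinate directions. -/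
noncomputable def HessMat {n : ℕ} (f : EuclideanSpace ℝ (Fin n) → ℝ)
    (x : EuclideanSpace ℝ (Fin n)) : Matrix (Fin n) (Fin n) ℝ :=
  fun i j => fderiv ℝ (fun y => fderiv ℝ f y (EuclideanSpace.single j 1)) x
    (EuclideanSpace.single i 1)

lemma hess_entry {n : ℕ} (a : ℝ) (x : EuclideanSpace ℝ (Fin n)) (i j : Fin n) :
    HessMat (fun t : EuclideanSpace ℝ (Fin n) => -Real.exp (-(a * ‖t‖ ^ 2))) x i j
      = 2 * a * Real.exp (-(a * ‖x‖ ^ 2)) *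
        ((if i = j then 1 else 0) - 2 * a * x i * x j) := by
  have hrw : (fun y : EuclideanSpace ℝ (Fin n) =>
      fderiv ℝ (fun t : EuclideanSpace ℝ (Fin n) => -Real.exp (-(a * ‖t‖ ^ 2))) y
        (EuclideanSpace.single j 1))
      = fun y : EuclideanSpace ℝ (Fin n) =>
        (2 * a * Real.exp (-(a * ‖y‖ ^ 2))) * y j :=
    funext fun y => fderiv_eval a y j
  have hc : HasFDerivAt (fun y : EuclideanSpace ℝ (Fin n) =>
      2 * a * Real.exp (-(a * ‖y‖ ^ 2)))
      ((2 * a * (Real.exp (-(a * ‖x‖ ^ 2)) * -a)) • L1 x) x := by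
    have h1 : HasFDerivAt (fun t : EuclideanSpace ℝ (Fin n) =>
        (inner ℝ t t : ℝ)) (L1 x) x :=
      (hasFDerivAt_id x).inner ℝ (hasFDerivAt_id x)
    have h2 : HasDerivAt (fun r : ℝ => 2 * a * Real.exp (-(a * r)))
        (2 * a * (Real.exp (-(a * ‖x‖ ^ 2)) * -a)) (inner ℝ x x : ℝ) := by
      have := (((hasDerivAt_id ((inner ℝ x x : ℝ))).const_mul a).neg.exp).const_mul (2 * a)
      simp only [id] at this
      refine this.congr_deriv ?_
      rw [real_inner_self_eq_norm_sq]; simp only [Pi.neg_apply]; ring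
    have := HasDerivAt.comp_hasFDerivAt
      (f := fun t : EuclideanSpace ℝ (Fin n) => (inner ℝ t t : ℝ)) x h2 h1
    simp only [Function.comp_def] at this
    rw [show (fun y : EuclideanSpace ℝ (Fin n) => 2 * a * Real.exp (-(a * ‖y‖ ^ 2)))
        = fun t => 2 * a * Real.exp (-(a * (inner ℝ t t : ℝ))) from
        funext fun t => by rw [real_inner_self_eq_norm_sq]]
    exact this
  have hd : HasFDerivAt (fun y : EuclideanSpace ℝ (Fin n) => y j)
      (EuclideanSpace.proj j : EuclideanSpace ℝ (Fin n) →L[ℝ] ℝ) x :=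
    (EuclideanSpace.proj j : EuclideanSpace ℝ (Fin n) →L[ℝ] ℝ).hasFDerivAt
  have hmul := hc.mul hd
  simp only [Pi.mul_def] at hmul
  show fderiv ℝ _ x (EuclideanSpace.single i 1) = _
  rw [hrw, hmul.fderiv]
  simp [fderivInnerCLM_apply, EuclideanSpace.inner_single_left,
    EuclideanSpace.inner_single_right, EuclideanSpace.single_apply,
    real_inner_comm]
  by_cases h : i = j <;> simp [h, eq_comm] <;> ring

open Matrix

/-- Let `ψ(x) = p|x|²/(2D²)`.  Then `−e^{−ψ}` is `p`-plurisubharmonic on the closed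
ball of radius `D`: at each point `x` with `|x| ≤ D`, every sum of `p` eigenvalues
of the Hessian matrix of `−e^{−ψ}` is nonnegative. -/
theorem stmt9 (n p : ℕ) (hp1 : 1 ≤ p) (hpn : p ≤ n) (D : ℝ) (hD : 0 < D)
    (x : EuclideanSpace ℝ (Fin n)) (hx : ‖x‖ ≤ D)
    (hH : (HessMat (fun y : EuclideanSpace ℝ (Fin n) =>
        -Real.exp (-((p : ℝ) * ‖y‖ ^ 2 / (2 * D ^ 2)))) x).IsHermitian)
    (s : Finset (Fin n)) (hs : s.card = p) :
    0 ≤ ∑ i ∈ s, hH.eigenvalues i := by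
  classical
  set a : ℝ := (p : ℝ) / (2 * D ^ 2) with ha
  set k : ℝ := 2 * a with hk
  set c : ℝ := k * Real.exp (-(a * ‖x‖ ^ 2)) with hc
  have hD2 : (0:ℝ) < D ^ 2 := by positivity
  have hfun : (fun y : EuclideanSpace ℝ (Fin n) =>
      -Real.exp (-((p : ℝ) * ‖y‖ ^ 2 / (2 * D ^ 2))))
      = fun y : EuclideanSpace ℝ (Fin n) => -Real.exp (-(a * ‖y‖ ^ 2)) := by
    funext y
    have : (p : ℝ) * ‖y‖ ^ 2 / (2 * D ^ 2) = a * ‖y‖ ^ 2 := by rw [ha]; ring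
    rw [this]
  have hA : ∀ i j, HessMat (fun y : EuclideanSpace ℝ (Fin n) =>
      -Real.exp (-((p : ℝ) * ‖y‖ ^ 2 / (2 * D ^ 2)))) x i j
      = c * ((if i = j then 1 else 0) - k * x i * x j) := by
    intro i j
    rw [hfun, hess_entry a x i j, hc, hk]
  set A := HessMat (fun y : EuclideanSpace ℝ (Fin n) =>
      -Real.exp (-((p : ℝ) * ‖y‖ ^ 2 / (2 * D ^ 2)))) x with hAdef
  set b := hH.eigenvectorBasis with hb
  set t : Fin n → ℝ := fun j => ∑ l, x l * (b j) l with ht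
  -- each eigenvalue
  have heig : ∀ j, hH.eigenvalues j = c * (1 - k * (t j) ^ 2) := by
    intro j
    have hmv : A *ᵥ ⇑(b j) = hH.eigenvalues j • ⇑(b j) :=
      hH.mulVec_eigenvectorBasis j
    have hunit : ∑ i, (b j) i * (b j) i = 1 := by
      have h1 : (inner ℝ (b j) (b j) : ℝ) = ‖b j‖ ^ 2 := real_inner_self_eq_norm_sq _
      have h2 : ‖b j‖ = 1 := b.orthonormal.1 j
      rw [h2] at h1
      rw [PiLp.inner_apply] at h1
      simp only [RCLike.inner_apply, conj_trivial] at h1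
      rw [h1]; norm_num
    have hAv : ∀ i, (A *ᵥ ⇑(b j)) i = c * ((b j) i - k * x i * t j) := by
      intro i
      show (∑ l, A i l * (b j) l) = _
      have hterm : ∀ l, A i l * (b j) l
          = (if i = l then c * (b j) l else 0) - c * (k * x i) * (x l * (b j) l) := by
        intro l
        rw [hA]
        by_cases h : i = l <;> simp [h] <;> ring
      rw [Finset.sum_congr rfl fun l _ => hterm l, Finset.sum_sub_distrib,
        Finset.sum_ite_eq, ← Finset.mul_sum]
      simp only [Finset.mem_univ, if_true]
      show c * (b j) i - c * (k * x i) * (∑ l, x l * (b j) l) = _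
      rw [ht]
      ring
    have hsm : ∀ i, (A *ᵥ ⇑(b j)) i = hH.eigenvalues j * (b j) i := by
      intro i; rw [hmv]; rfl
    have key : hH.eigenvalues j = ∑ i, (b j) i * (A *ᵥ ⇑(b j)) i := by
      rw [Finset.sum_congr rfl fun i _ => by rw [hsm i]]
      rw [Finset.sum_congr rfl (fun i _ => by ring :
        ∀ i ∈ Finset.univ, (b j) i * (hH.eigenvalues j * (b j) i)
          = hH.eigenvalues j * ((b j) i * (b j) i)), ← Finset.mul_sum, hunit, mul_one]
    rw [key, Finset.sum_congr rfl fun i _ => by rw [hAv i]]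
    have e1 : ∑ i, (b j) i * (c * ((b j) i - k * x i * t j))
        = c * (∑ i, (b j) i * (b j) i) - c * k * t j * (∑ i, x i * (b j) i) := by
      rw [Finset.mul_sum, Finset.mul_sum, ← Finset.sum_sub_distrib]
      exact Finset.sum_congr rfl fun i _ => by ring
    rw [e1, hunit]
    show c * 1 - c * k * t j * t j = _
    ring
  -- Parseval
  have hpar : ∑ j, (t j) ^ 2 = ‖x‖ ^ 2 := by
    have h0 : ∀ j, t j = b.repr x j := by
      intro j
      rw [b.repr_apply_apply, PiLp.inner_apply]
      simp only [RCLike.inner_apply, conj_trivial]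
      show (∑ l, x l * (b j) l) = _
      exact Finset.sum_congr rfl fun l _ => by ring
    have h1 : ‖b.repr x‖ = ‖x‖ := b.repr.norm_map x
    have h2 : (inner ℝ (b.repr x) (b.repr x) : ℝ) = ‖b.repr x‖ ^ 2 :=
      real_inner_self_eq_norm_sq _
    rw [PiLp.inner_apply] at h2
    simp only [RCLike.inner_apply, conj_trivial] at h2
    calc ∑ j, (t j) ^ 2 = ∑ j, (b.repr x j) * (b.repr x j) := by
          exact Finset.sum_congr rfl fun j _ => by rw [h0 j]; ring
      _ = ‖b.repr x‖ ^ 2 := h2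
      _ = ‖x‖ ^ 2 := by rw [h1]
  -- conclude
  have hknn : 0 ≤ k := by
    rw [hk, ha]; positivity
  have hcnn : 0 ≤ c := by
    rw [hc]; positivity
  have hsum : ∑ i ∈ s, hH.eigenvalues i = c * ((p : ℝ) - k * ∑ i ∈ s, (t i) ^ 2) := by
    calc ∑ i ∈ s, hH.eigenvalues i
        = ∑ i ∈ s, ((c : ℝ) - (c * k) * (t i) ^ 2) :=
          Finset.sum_congr rfl fun i _ => by rw [heig i]; ring
      _ = s.card • c - ∑ i ∈ s, (c * k) * (t i) ^ 2 := by
          rw [Finset.sum_sub_distrib, Finset.sum_const]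
      _ = c * ((p : ℝ) - k * ∑ i ∈ s, (t i) ^ 2) := by
          rw [← Finset.mul_sum, hs, nsmul_eq_mul]; ring
  rw [hsum]
  apply mul_nonneg hcnn
  have hle : ∑ i ∈ s, (t i) ^ 2 ≤ ‖x‖ ^ 2 := by
    rw [← hpar]
    exact Finset.sum_le_sum_of_subset_of_nonneg (Finset.subset_univ s)
      (fun i _ _ => sq_nonneg _)
  have hxD : ‖x‖ ^ 2 ≤ D ^ 2 := by
    have := norm_nonneg x
    nlinarith
  have hkD : k * D ^ 2 = (p : ℝ) := by
    rw [hk, ha]; field_simp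
  have : k * ∑ i ∈ s, (t i) ^ 2 ≤ (p : ℝ) := by
    calc k * ∑ i ∈ s, (t i) ^ 2 ≤ k * D ^ 2 :=
          mul_le_mul_of_nonneg_left (hle.trans hxD) hknn
      _ = (p : ℝ) := hkD
  linarith
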